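/- Let a, b, c, d ∈ ℝ with c ≠ 0, and define q(x,t) = c·exp(i(ax + bt)) and r(x,t) = i·d·exp(i(ax + bt)). Then (q,r) satisfies the Frobenius NLS system if and only if b + a² − 2c² = 0. -/

import Mathlib

open Complex

lemma auxHasDeriv (c' : ℂ) (α k s : ℝ) :
    HasDerivAt (fun s' : ℝ => c' * Complex.exp (I * ((α * s' + k : ℝ) : ℂ)))
      (c' * (I * α) * Complex.exp (I * ((α * s + k : ℝ) : ℂ))) s := by
  have h1 : HasDerivAt (fun s' : ℝ => (s' : ℂ)) 1 s := by
    simpa using (hasDerivAt_id s).ofReal_comp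
  have h2 : HasDerivAt (fun s' : ℝ => (I * α) * (s' : ℂ) + I * k) (I * α) s := by
    simpa using (h1.const_mul (I * (α : ℂ))).add_const (I * k)
  have h3 := h2.cexp
  have heq : (fun s' : ℝ => Complex.exp ((I * α) * (s' : ℂ) + I * k))
      = fun s' : ℝ => Complex.exp (I * ((α * s' + k : ℝ) : ℂ)) := by
    funext s'; push_cast; ring_nf
  have h4 : HasDerivAt (fun s' : ℝ => Complex.exp (I * ((α * s' + k : ℝ) : ℂ)))
      (Complex.exp (I * ((α * s + k : ℝ) : ℂ)) * (I * α)) s := by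
    rw [← heq]
    convert h3 using 2
    push_cast; ring
  simpa [mul_comm, mul_assoc, mul_left_comm] using h4.const_mul c'

/-- Partial derivative in `x` of a function of `(x,t)`. -/
noncomputable def pX (f : ℝ → ℝ → ℂ) : ℝ → ℝ → ℂ := fun x t => deriv (fun x' => f x' t) x

/-- Partial derivative in `t` of a function of `(x,t)`. -/
noncomputable def pT (f : ℝ → ℝ → ℂ) : ℝ → ℝ → ℂ := fun x t => deriv (fun t' => f x t') t

/-- The Frobenius NLS system:
`i q_t + q_xx + 2 q² conj(q) = 0` and `i r_t + r_xx + 2 q² conj(r) + 4 q conj(q) r = 0`. -/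
def FrobeniusNLS (q r : ℝ → ℝ → ℂ) : Prop :=
  (∀ x t : ℝ, I * pT q x t + pX (pX q) x t + 2 * (q x t) ^ 2 * (starRingEnd ℂ) (q x t) = 0)
  ∧ (∀ x t : ℝ, I * pT r x t + pX (pX r) x t + 2 * (q x t) ^ 2 * (starRingEnd ℂ) (r x t)
      + 4 * q x t * (starRingEnd ℂ) (q x t) * r x t = 0)

/-- the periodic seed `q = c e^{i(ax+bt)}`, `r = i d e^{i(ax+bt)}` (with
`c ≠ 0`) satisfies the Frobenius NLS system iff `b + a² − 2c² = 0`. -/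
theorem statement10 (a b c d : ℝ) (hc : c ≠ 0) (q r : ℝ → ℝ → ℂ)
    (hq : ∀ x t : ℝ, q x t = (c : ℂ) * Complex.exp (I * ((a * x + b * t : ℝ) : ℂ)))
    (hr : ∀ x t : ℝ, r x t = I * (d : ℂ) * Complex.exp (I * ((a * x + b * t : ℝ) : ℂ))) :
    FrobeniusNLS q r ↔ b + a ^ 2 - 2 * c ^ 2 = 0 := by
  set E : ℝ → ℝ → ℂ := fun x t => Complex.exp (I * ((a * x + b * t : ℝ) : ℂ)) with hE
  have hq' : ∀ x t : ℝ, q x t = (c : ℂ) * E x t := hq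
  have hr' : ∀ x t : ℝ, r x t = I * (d : ℂ) * E x t := hr
  have hE0 : ∀ x t : ℝ, E x t ≠ 0 := fun x t => Complex.exp_ne_zero _
  have hcE : ∀ x t : ℝ, (starRingEnd ℂ) (E x t) = (E x t)⁻¹ := by
    intro x t
    show (starRingEnd ℂ) (Complex.exp (I * ((a * x + b * t : ℝ) : ℂ)))
        = (Complex.exp (I * ((a * x + b * t : ℝ) : ℂ)))⁻¹
    rw [← Complex.exp_conj, ← Complex.exp_neg]
    congr 1
    simp [Complex.conj_ofReal]
  have genX : ∀ (c' : ℂ) (x t : ℝ), deriv (fun x' : ℝ => c' * E x' t) x = c' * (I * a) * E x t := by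
    intro c' x t
    exact (auxHasDeriv c' a (b * t) x).deriv
  have genT : ∀ (c' : ℂ) (x t : ℝ), deriv (fun t' : ℝ => c' * E x t') t = c' * (I * b) * E x t := by
    intro c' x t
    have harg : ∀ t' : ℝ, ((b * t' + a * x : ℝ) : ℂ) = ((a * x + b * t' : ℝ) : ℂ) := by
      intro t'; norm_cast; ring
    have h1 : (fun t' : ℝ => c' * E x t')
        = fun t' : ℝ => c' * Complex.exp (I * ((b * t' + a * x : ℝ) : ℂ)) := by
      funext t'
      show c' * Complex.exp (I * ((a * x + b * t' : ℝ) : ℂ)) = _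
      rw [harg]
    rw [h1, (auxHasDeriv c' b (a * x) t).deriv]
    show _ = c' * (I * b) * Complex.exp (I * ((a * x + b * t : ℝ) : ℂ))
    rw [harg]
  have hqt : ∀ x t : ℝ, pT q x t = (c : ℂ) * (I * b) * E x t := by
    intro x t
    show deriv (fun t' : ℝ => q x t') t = _
    rw [funext fun t' => hq' x t', genT]
  have hqx : ∀ x t : ℝ, pX q x t = (c : ℂ) * (I * a) * E x t := by
    intro x t
    show deriv (fun x' : ℝ => q x' t) x = _
    rw [funext fun x' => hq' x' t, genX]
  have hqxx : ∀ x t : ℝ, pX (pX q) x t = (c : ℂ) * (I * a) * (I * a) * E x t := by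
    intro x t
    show deriv (fun x' : ℝ => pX q x' t) x = _
    have h1 : (fun x' : ℝ => pX q x' t) = fun x' : ℝ => ((c : ℂ) * (I * a)) * E x' t :=
      funext fun x' => hqx x' t
    rw [h1, genX]
  have hrt : ∀ x t : ℝ, pT r x t = (I * (d : ℂ)) * (I * b) * E x t := by
    intro x t
    show deriv (fun t' : ℝ => r x t') t = _
    rw [funext fun t' => hr' x t', genT]
  have hrx : ∀ x t : ℝ, pX r x t = (I * (d : ℂ)) * (I * a) * E x t := by
    intro x t
    show deriv (fun x' : ℝ => r x' t) x = _
    rw [funext fun x' => hr' x' t, genX]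
  have hrxx : ∀ x t : ℝ, pX (pX r) x t = (I * (d : ℂ)) * (I * a) * (I * a) * E x t := by
    intro x t
    show deriv (fun x' : ℝ => pX r x' t) x = _
    have h1 : (fun x' : ℝ => pX r x' t) = fun x' : ℝ => ((I * (d : ℂ)) * (I * a)) * E x' t :=
      funext fun x' => hrx x' t
    rw [h1, genX]
  have hconjq : ∀ x t : ℝ, (starRingEnd ℂ) (q x t) = (c : ℂ) * (E x t)⁻¹ := by
    intro x t; rw [hq' x t, map_mul, Complex.conj_ofReal, hcE]
  have hconjr : ∀ x t : ℝ, (starRingEnd ℂ) (r x t) = -I * (d : ℂ) * (E x t)⁻¹ := by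
    intro x t; rw [hr' x t, map_mul, map_mul, Complex.conj_I, Complex.conj_ofReal, hcE]
  have hI : (I : ℂ) ^ 2 = -1 := Complex.I_sq
  constructor
  · rintro ⟨h1, -⟩
    have h := h1 0 0
    rw [hqt, hqxx, hconjq, hq'] at h
    set e : ℂ := E 0 0 with he_def
    have he : e ≠ 0 := hE0 0 0
    have hsq : e * e⁻¹ = 1 := mul_inv_cancel₀ he
    have key2 : (c : ℂ) * e * ((b : ℂ) + (a : ℂ) ^ 2 - 2 * (c : ℂ) ^ 2) = 0 := by
      linear_combination -h + 2 * (c : ℂ) ^ 3 * e * hsq + (c : ℂ) * b * e * hI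
        + (c : ℂ) * a ^ 2 * e * hI
    have key3 : ((b : ℂ) + (a : ℂ) ^ 2 - 2 * (c : ℂ) ^ 2) = 0 := by
      rcases mul_eq_zero.1 key2 with h' | h'
      · rcases mul_eq_zero.1 h' with h'' | h''
        · exact absurd h'' (by exact_mod_cast hc)
        · exact absurd h'' he
      · exact h'
    have : (((b + a ^ 2 - 2 * c ^ 2 : ℝ)) : ℂ) = 0 := by push_cast; exact key3
    exact_mod_cast this
  · intro hb
    have hC : ((b : ℂ) + (a : ℂ) ^ 2 - 2 * (c : ℂ) ^ 2) = 0 := by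
      have : (((b + a ^ 2 - 2 * c ^ 2 : ℝ)) : ℂ) = 0 := by exact_mod_cast hb
      push_cast at this; exact this
    constructor
    · intro x t
      rw [hqt, hqxx, hconjq, hq']
      set e : ℂ := E x t with he_def
      have hsq : e * e⁻¹ = 1 := mul_inv_cancel₀ (hE0 x t)
      linear_combination 2 * (c : ℂ) ^ 3 * e * hsq + (-(c : ℂ) * e) * hC
        + (c : ℂ) * b * e * hI + (c : ℂ) * a ^ 2 * e * hI
    · intro x t
      rw [hrt, hrxx, hconjq, hconjr, hq', hr']
      set e : ℂ := E x t with he_def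
      have hsq : e * e⁻¹ = 1 := mul_inv_cancel₀ (hE0 x t)
      linear_combination 2 * I * (d : ℂ) * c ^ 2 * e * hsq + (-(I * (d : ℂ) * e)) * hC
        + I * (d : ℂ) * ((b : ℂ) + a ^ 2) * e * hI
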